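/- Let f : [0,∞) → ℝ be C^{n+2} with ∂_x^j f(0) = 0 for 0 ≤ j ≤ n+1. Then for all R > 0, the n-th derivative of f̃(x) = f(x)/x² satisfies ∂_x^n f̃(R) = R^{-(n+2)} ∫_0^R ∫_0^r (r')^n ∂_x^{n+2} f(r') dr' dr, and hence |∂_x^n f̃(R)| ≤ C sup_{0 ≤ x ≤ R} |∂_x^{n+2} f(x)| for a constant C depending only on n. -/

import Mathlib

section Aux
open Finset

noncomputable def aa (k m : ℕ) : ℝ := (-1)^m * (k.choose m) * (Nat.factorial (m+1))
noncomputable def bb (k m : ℕ) : ℝ := (-1)^m * (k.choose m) * (Nat.factorial m)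

lemma aa_zero (k : ℕ) : aa k 0 = 1 := by simp [aa]
lemma bb_zero (k : ℕ) : bb k 0 = 1 := by simp [bb]
lemma aa_top (k : ℕ) : aa k (k+1) = 0 := by simp [aa]

lemma aa_succ (k m : ℕ) : aa (k+1) (m+1) = aa k (m+1) - ((m:ℝ)+2) * aa k m := by
  have h := Nat.choose_succ_succ k m
  simp only [aa, pow_succ, Nat.factorial_succ]
  push_cast [h]
  ring

lemma bb_succ (k m : ℕ) : bb k (m+1) = aa k (m+1) + ((k - m : ℕ) : ℝ) * aa k m := by
  have h := Nat.choose_succ_right_eq k m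
  have h' : ((k.choose (m+1) * (m+1) : ℕ) : ℝ) = ((k.choose m * (k - m) : ℕ) : ℝ) := by rw [h]
  push_cast [Nat.cast_mul] at h'
  simp only [aa, bb, pow_succ, Nat.factorial_succ]
  push_cast
  linear_combination ((-1:ℝ)^m * ((m:ℝ)+1) * (Nat.factorial m)) * h'

lemma bb_succ' (k m : ℕ) : bb k (m+1) = -(((k - m : ℕ) : ℝ) * bb k m) := by
  have h := Nat.choose_succ_right_eq k m
  have h' : ((k.choose (m+1) * (m+1) : ℕ) : ℝ) = ((k.choose m * (k - m) : ℕ) : ℝ) := by rw [h]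
  push_cast [Nat.cast_mul] at h'
  simp only [bb, pow_succ, Nat.factorial_succ]
  push_cast
  linear_combination (-((-1:ℝ)^m * (Nat.factorial m))) * h'

lemma shift_sum (N : ℕ) (c d : ℕ → ℝ) (u : ℕ → ℝ)
    (h0 : d 0 = 0) (hs : ∀ m, m < N → d (m+1) = c m) (hN : c N = 0) :
    ∑ m ∈ range (N+1), c m * u (m+1) = ∑ m ∈ range (N+1), d m * u m := by
  rw [Finset.sum_range_succ, hN, Finset.sum_range_succ' (fun m => d m * u m) N, h0]
  simp only [zero_mul, add_zero]
  exact Finset.sum_congr rfl fun m hm => by rw [hs m (mem_range.mp hm)]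

noncomputable def QQ (n : ℕ) (f : ℝ → ℝ) (x : ℝ) : ℝ :=
  ∑ m ∈ range (n+1), aa n m * (x^(n-m) * iteratedDeriv (n-m) f x)
noncomputable def RR (n : ℕ) (f : ℝ → ℝ) (x : ℝ) : ℝ :=
  ∑ m ∈ range (n+1), bb n m * (x^(n-m) * iteratedDeriv (n+1-m) f x)

lemma hasDerivAt_iter {n : ℕ} {f : ℝ → ℝ} (hf : ContDiff ℝ ((n+2:ℕ) : WithTop ℕ∞) f)
    {j : ℕ} (hj : j ≤ n + 1) (x : ℝ) :
    HasDerivAt (iteratedDeriv j f) (iteratedDeriv (j+1) f x) x := by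
  have hd : Differentiable ℝ (iteratedDeriv j f) :=
    hf.differentiable_iteratedDeriv j (Nat.cast_lt.mpr (by omega))
  rw [iteratedDeriv_succ]
  exact (hd x).hasDerivAt

lemma hasDerivAt_QQ {n : ℕ} {f : ℝ → ℝ} (hf : ContDiff ℝ ((n+2:ℕ) : WithTop ℕ∞) f) (x : ℝ) :
    HasDerivAt (QQ n f) (RR n f x) x := by
  have H : HasDerivAt (QQ n f)
      (∑ m ∈ range (n+1), aa n m * ((↑(n-m) * x^(n-m-1)) * iteratedDeriv (n-m) f x
        + x^(n-m) * iteratedDeriv ((n-m)+1) f x)) x := by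
    apply HasDerivAt.fun_sum
    intro m hm
    exact ((hasDerivAt_pow (n-m) x).mul (hasDerivAt_iter hf (by omega) x)).const_mul (aa n m)
  convert H using 1
  set u : ℕ → ℝ := fun m => x^(n-m) * iteratedDeriv (n+1-m) f x with hu
  have step1 : ∑ m ∈ range (n+1), aa n m * ((↑(n-m) * x^(n-m-1)) * iteratedDeriv (n-m) f x
        + x^(n-m) * iteratedDeriv ((n-m)+1) f x)
      = ∑ m ∈ range (n+1), ((aa n m * ↑(n-m)) * u (m+1) + aa n m * u m) := by
    apply Finset.sum_congr rfl
    intro m hm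
    have hm' : m ≤ n := by have := mem_range.mp hm; omega
    have e1 : n - m - 1 = n - (m+1) := by omega
    have e2 : n + 1 - (m+1) = n - m := by omega
    have e3 : (n - m) + 1 = n + 1 - m := by omega
    simp only [hu, e1, e2, e3]
    ring
  have step2 : ∑ m ∈ range (n+1), ((aa n m * ↑(n-m)) * u (m+1))
      = ∑ m ∈ range (n+1), (bb n m - aa n m) * u m := by
    apply shift_sum
    · rw [bb_zero, aa_zero]; ring
    · intro m hm; rw [bb_succ]; ring
    · simp
  rw [step1, Finset.sum_add_distrib, step2, ← Finset.sum_add_distrib]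
  apply Finset.sum_congr rfl
  intro m hm
  show bb n m * u m = _
  ring

lemma hasDerivAt_RR {n : ℕ} {f : ℝ → ℝ} (hf : ContDiff ℝ ((n+2:ℕ) : WithTop ℕ∞) f) (x : ℝ) :
    HasDerivAt (RR n f) (x^n * iteratedDeriv (n+2) f x) x := by
  have H : HasDerivAt (RR n f)
      (∑ m ∈ range (n+1), bb n m * ((↑(n-m) * x^(n-m-1)) * iteratedDeriv (n+1-m) f x
        + x^(n-m) * iteratedDeriv ((n+1-m)+1) f x)) x := by
    apply HasDerivAt.fun_sum
    intro m hm
    exact ((hasDerivAt_pow (n-m) x).mul (hasDerivAt_iter hf (by omega) x)).const_mul (bb n m)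
  convert H using 1
  set v : ℕ → ℝ := fun m => x^(n-m) * iteratedDeriv (n+2-m) f x with hv
  have step1 : ∑ m ∈ range (n+1), bb n m * ((↑(n-m) * x^(n-m-1)) * iteratedDeriv (n+1-m) f x
        + x^(n-m) * iteratedDeriv ((n+1-m)+1) f x)
      = ∑ m ∈ range (n+1), ((bb n m * ↑(n-m)) * v (m+1) + bb n m * v m) := by
    apply Finset.sum_congr rfl
    intro m hm
    have hm' : m ≤ n := by have := mem_range.mp hm; omega
    have e1 : n - m - 1 = n - (m+1) := by omega
    have e3 : (n + 1 - m) + 1 = n + 2 - m := by omega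
    have e2 : n + 1 - m = n + 2 - (m+1) := by omega
    simp only [hv]
    rw [e1, e3, e2]
    ring
  have step2 : ∑ m ∈ range (n+1), ((bb n m * ↑(n-m)) * v (m+1))
      = ∑ m ∈ range (n+1), ((if m = 0 then 1 else 0) - bb n m) * v m := by
    apply shift_sum
    · simp [bb_zero]
    · intro m hm; rw [if_neg (by omega), bb_succ']; ring
    · simp
  have step3 : ∑ m ∈ range (n+1), (if m = 0 then (1:ℝ) else 0) * v m = v 0 := by
    have h1 : ∀ m ∈ range (n+1), (if m = 0 then (1:ℝ) else 0) * v m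
        = if m = 0 then v m else 0 := by
      intro m _; split <;> simp
    rw [Finset.sum_congr rfl h1, Finset.sum_ite_eq' (range (n+1)) 0 (fun m => v m),
      if_pos (by simp)]
  rw [step1, Finset.sum_add_distrib, step2, ← Finset.sum_add_distrib]
  have h2 : ∑ m ∈ range (n+1), (((if m = 0 then (1:ℝ) else 0) - bb n m) * v m + bb n m * v m)
      = ∑ m ∈ range (n+1), (if m = 0 then (1:ℝ) else 0) * v m :=
    Finset.sum_congr rfl (fun m _ => by ring)
  rw [h2, step3]
  simp [hv]

lemma shift_sum' (N : ℕ) (c d : ℕ → ℝ) (u : ℕ → ℝ)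
    (h0 : d 0 = 0) (hs : ∀ m, m < N + 1 → d (m+1) = c m) :
    ∑ m ∈ range (N+1), c m * u (m+1) = ∑ m ∈ range (N+2), d m * u m := by
  rw [Finset.sum_range_succ' (fun m => d m * u m) (N+1), h0]
  simp only [zero_mul, add_zero]
  exact Finset.sum_congr rfl fun m hm => by rw [hs m (mem_range.mp hm)]

lemma repr_div {n : ℕ} {f : ℝ → ℝ} (hf : ContDiff ℝ ((n+2:ℕ) : WithTop ℕ∞) f) :
    ∀ k, k ≤ n → ∀ x : ℝ, 0 < x →
      iteratedDeriv k (fun y => f y / y^2) x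
        = ∑ m ∈ range (k+1), aa k m * (iteratedDeriv (k-m) f x / x^(m+2)) := by
  intro k
  induction k with
  | zero => intro _ x hx; simp [aa_zero]
  | succ k ih =>
    intro hk x hx
    have hk' : k ≤ n := by omega
    rw [iteratedDeriv_succ]
    have hEq : deriv (iteratedDeriv k (fun y => f y / y^2)) x
        = deriv (fun y => ∑ m ∈ range (k+1),
            aa k m * (iteratedDeriv (k-m) f y / y^(m+2))) x := by
      apply Filter.EventuallyEq.deriv_eq
      filter_upwards [Ioi_mem_nhds hx] with y hy
      exact ih hk' y hy
    rw [hEq]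
    have H : HasDerivAt (fun y => ∑ m ∈ range (k+1),
          aa k m * (iteratedDeriv (k-m) f y / y^(m+2)))
        (∑ m ∈ range (k+1), aa k m *
          ((iteratedDeriv ((k-m)+1) f x * x^(m+2)
            - iteratedDeriv (k-m) f x * (↑(m+2) * x^(m+2-1))) / (x^(m+2))^2)) x := by
      apply HasDerivAt.fun_sum
      intro m hm
      have hd := hasDerivAt_iter hf (j := k - m) (by omega) x
      exact (hd.div (hasDerivAt_pow (m+2) x) (by positivity)).const_mul (aa k m)
    rw [H.deriv]
    set w : ℕ → ℝ := fun m => iteratedDeriv (k+1-m) f x / x^(m+2) with hw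
    have step1 : ∑ m ∈ range (k+1), aa k m *
          ((iteratedDeriv ((k-m)+1) f x * x^(m+2)
            - iteratedDeriv (k-m) f x * (↑(m+2) * x^(m+2-1))) / (x^(m+2))^2)
        = ∑ m ∈ range (k+1), (aa k m * w m + (-(((m:ℝ)+2) * aa k m)) * w (m+1)) := by
      apply Finset.sum_congr rfl
      intro m hm
      have hm' : m ≤ k := by have := mem_range.mp hm; omega
      have e1 : (k - m) + 1 = k + 1 - m := by omega
      have e2 : k - m = k + 1 - (m + 1) := by omega
      simp only [hw]
      rw [e1, e2]
      have hx0 : x ≠ 0 := ne_of_gt hx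
      field_simp
      push_cast
      ring
    have step2 : ∑ m ∈ range (k+1), (-(((m:ℝ)+2) * aa k m)) * w (m+1)
        = ∑ m ∈ range (k+2), (aa (k+1) m - aa k m) * w m := by
      apply shift_sum'
      · rw [aa_zero, aa_zero]; ring
      · intro m hm; rw [aa_succ]; ring
    have step3 : ∑ m ∈ range (k+2), aa k m * w m = ∑ m ∈ range (k+1), aa k m * w m := by
      rw [Finset.sum_range_succ (fun m => aa k m * w m) (k+1), aa_top]; ring
    rw [step1, Finset.sum_add_distrib, step2, ← step3, ← Finset.sum_add_distrib]
    apply Finset.sum_congr rfl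
    intro m hm
    show _ = aa (k+1) m * (iteratedDeriv (k+1-m) f x / x^(m+2))
    simp only [hw]
    ring

end Aux


open MeasureTheory intervalIntegral

/-- For `f : [0,∞) → ℝ` of class `C^{n+2}` with `∂_x^j f(0) = 0` for `j ≤ n+1`,
the `n`-th derivative of `f̃(x) = f(x)/x²` has the integral representation
`∂_x^n f̃(R) = R^{-(n+2)} ∫_0^R ∫_0^r (r')^n ∂_x^{n+2} f(r') dr' dr`, and hence
`|∂_x^n f̃(R)| ≤ C sup_{0 ≤ x ≤ R} |∂_x^{n+2} f(x)|`. -/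
theorem deriv_div_sq_repr (n : ℕ) (f : ℝ → ℝ)
    (hf : ContDiff ℝ (n + 2) f)
    (h0 : ∀ j : ℕ, j ≤ n + 1 → iteratedDeriv j f 0 = 0) :
    ∃ C > 0, ∀ R : ℝ, 0 < R →
      (iteratedDeriv n (fun x => f x / x ^ 2) R
          = (R ^ (n + 2))⁻¹ *
            ∫ r in (0:ℝ)..R, ∫ r' in (0:ℝ)..r, r' ^ n * iteratedDeriv (n + 2) f r') ∧
      ∀ M : ℝ, (∀ x ∈ Set.Icc (0:ℝ) R, |iteratedDeriv (n + 2) f x| ≤ M) →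
        |iteratedDeriv n (fun x => f x / x ^ 2) R| ≤ C * M := by
  have hf' : ContDiff ℝ ((n+2:ℕ) : WithTop ℕ∞) f := by exact_mod_cast hf
  have hcont : Continuous (iteratedDeriv (n+2) f) :=
    hf'.continuous_iteratedDeriv (n+2) le_rfl
  have hRRcont : Continuous (RR n f) :=
    continuous_iff_continuousAt.mpr fun x => (hasDerivAt_RR hf' x).continuousAt
  have hR0 : RR n f 0 = 0 := by
    apply Finset.sum_eq_zero
    intro m hm
    by_cases hmn : m = n
    · rw [hmn]
      have e : n + 1 - n = 1 := by omega
      have h1' : deriv f 0 = 0 := by rw [← iteratedDeriv_one]; exact h0 1 (by omega)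
      simp [e, h1']
    · have hne : n - m ≠ 0 := by have := Finset.mem_range.mp hm; omega
      rw [zero_pow hne]; ring
  have hQ0 : QQ n f 0 = 0 := by
    apply Finset.sum_eq_zero
    intro m hm
    by_cases hmn : m = n
    · rw [hmn]
      have h1' : f 0 = 0 := by have := h0 0 (by omega); simpa using this
      simp [Nat.sub_self, h1']
    · have hne : n - m ≠ 0 := by have := Finset.mem_range.mp hm; omega
      rw [zero_pow hne]; ring
  have hInner : ∀ r : ℝ, (∫ r' in (0:ℝ)..r, r' ^ n * iteratedDeriv (n+2) f r') = RR n f r := by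
    intro r
    have := intervalIntegral.integral_eq_sub_of_hasDerivAt
      (f := RR n f) (f' := fun x => x ^ n * iteratedDeriv (n+2) f x)
      (a := 0) (b := r)
      (fun x _ => hasDerivAt_RR hf' x)
      (((continuous_pow n).mul hcont).intervalIntegrable 0 r)
    rw [this, hR0, sub_zero]
  refine ⟨1, one_pos, ?_⟩
  intro R hR
  have hRne : R ≠ 0 := ne_of_gt hR
  have hDouble : (∫ r in (0:ℝ)..R, ∫ r' in (0:ℝ)..r, r' ^ n * iteratedDeriv (n+2) f r')
      = QQ n f R := by
    simp only [hInner]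
    have := intervalIntegral.integral_eq_sub_of_hasDerivAt
      (f := QQ n f) (f' := RR n f) (a := 0) (b := R)
      (fun x _ => hasDerivAt_QQ hf' x)
      (hRRcont.intervalIntegrable 0 R)
    rw [this, hQ0, sub_zero]
  have hKey : iteratedDeriv n (fun x => f x / x ^ 2) R = (R ^ (n + 2))⁻¹ * QQ n f R := by
    rw [repr_div hf' n le_rfl R hR, QQ, Finset.mul_sum]
    apply Finset.sum_congr rfl
    intro m hm
    have hm' : m ≤ n := by have := Finset.mem_range.mp hm; omega
    have hpow : R ^ (n+2) = R ^ (m+2) * R ^ (n-m) := by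
      rw [← pow_add]; congr 1; omega
    rw [hpow]
    field_simp
  constructor
  · rw [hKey, hDouble]
  · intro M hM
    have hM0 : 0 ≤ M := le_trans (abs_nonneg _) (hM 0 ⟨le_refl 0, hR.le⟩)
    have hInnerBound : ∀ r ∈ Set.Icc (0:ℝ) R, |RR n f r| ≤ R ^ n * M * R := by
      intro r hr
      rw [← hInner r, ← Real.norm_eq_abs]
      have h1 : ‖∫ r' in (0:ℝ)..r, r' ^ n * iteratedDeriv (n+2) f r'‖
          ≤ R ^ n * M * |r - 0| := by
        apply intervalIntegral.norm_integral_le_of_norm_le_const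
        intro x hx
        rw [Set.uIoc_of_le hr.1] at hx
        have hx1 : 0 < x := hx.1
        have hx2 : x ≤ R := le_trans hx.2 hr.2
        rw [Real.norm_eq_abs, abs_mul, abs_pow]
        have : |x| ^ n ≤ R ^ n := by
          apply pow_le_pow_left₀ (abs_nonneg x)
          rw [abs_of_pos hx1]; exact hx2
        calc |x| ^ n * |iteratedDeriv (n+2) f x|
            ≤ R ^ n * M := by
              apply mul_le_mul this (hM x ⟨hx1.le, hx2⟩) (abs_nonneg _)
                (pow_nonneg hR.le n)
          _ = R ^ n * M := rfl
      calc ‖∫ r' in (0:ℝ)..r, r' ^ n * iteratedDeriv (n+2) f r'‖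
          ≤ R ^ n * M * |r - 0| := h1
        _ ≤ R ^ n * M * R := by
            apply mul_le_mul_of_nonneg_left _ (by positivity)
            rw [sub_zero, abs_of_nonneg hr.1]; exact hr.2
    have hOuterBound : |QQ n f R| ≤ R ^ n * M * R * R := by
      rw [← hDouble, ← Real.norm_eq_abs]
      have h2 : ‖∫ r in (0:ℝ)..R, ∫ r' in (0:ℝ)..r, r' ^ n * iteratedDeriv (n+2) f r'‖
          ≤ (R ^ n * M * R) * |R - 0| := by
        apply intervalIntegral.norm_integral_le_of_norm_le_const
        intro r hr
        rw [Set.uIoc_of_le hR.le] at hr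
        rw [Real.norm_eq_abs, hInner r]
        exact hInnerBound r ⟨hr.1.le, hr.2⟩
      calc ‖_‖ ≤ (R ^ n * M * R) * |R - 0| := h2
        _ = R ^ n * M * R * R := by rw [sub_zero, abs_of_pos hR]
    rw [hKey, abs_mul, abs_inv, abs_pow, abs_of_pos hR, one_mul]
    have hpow2 : R ^ n * M * R * R = R ^ (n+2) * M := by ring
    calc (R ^ (n+2))⁻¹ * |QQ n f R| ≤ (R ^ (n+2))⁻¹ * (R ^ (n+2) * M) := by
          apply mul_le_mul_of_nonneg_left _ (by positivity)
          rw [← hpow2]; exact hOuterBound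
      _ = M := by field_simp
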